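/- For every n ∈ ℤ, a word w in the free monoid on the alphabet B represents the element b·y_n of T if and only if w = u b y_m for some integer m and some word u consisting only of the letters a and c in which the number of occurrences of the letter a equals n − m. -/

import Mathlib

/-- The alphabet of the monoid `T`: letters `a`, `b`, `c` and `x n`, `y n` for `n : ℤ`. -/
inductive TGen : Type
  | a : TGen
  | b : TGen
  | c : TGen
  | x : ℤ → TGen
  | y : ℤ → TGen
  deriving DecidableEq

/-- The defining relations of `T`: `a·b·x n = b·x n`, `a·b·y n = b·y (n+1)`,
`c·b·x n = b·x (n+1)` and `c·b·y n = b·y n` for `n ∈ ℤ`. -/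
inductive TRel : FreeMonoid TGen → FreeMonoid TGen → Prop
  | axr (n : ℤ) : TRel (.of .a * .of .b * .of (.x n)) (.of .b * .of (.x n))
  | ayr (n : ℤ) : TRel (.of .a * .of .b * .of (.y n)) (.of .b * .of (.y (n + 1)))
  | cxr (n : ℤ) : TRel (.of .c * .of .b * .of (.x n)) (.of .b * .of (.x (n + 1)))
  | cyr (n : ℤ) : TRel (.of .c * .of .b * .of (.y n)) (.of .b * .of (.y n))

/-- The monoid `T` presented by the generators `TGen` and the relations `TRel`. -/
abbrev T : Type := PresentedMonoid TRel

/-- The images of the generators in `T`. -/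
def gen (g : TGen) : T := PresentedMonoid.of TRel g

/-- The principal right ideal `sM` of a monoid. -/
def rIdeal {M : Type*} [Monoid M] (s : M) : Set M := {m | ∃ u, m = s * u}
def step (g : TGen) (s : List TGen) : List TGen :=
  match g, s with
  | .a, .b :: .x n :: t => .b :: .x n :: t
  | .a, .b :: .y n :: t => .b :: .y (n+1) :: t
  | .c, .b :: .x n :: t => .b :: .x (n+1) :: t
  | .c, .b :: .y n :: t => .b :: .y n :: t
  | g, s => g :: s

def stepE : TGen → Function.End (List TGen) := step

lemma hstep : ∀ r₁ r₂ : FreeMonoid TGen, TRel r₁ r₂ →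
    FreeMonoid.lift stepE r₁ = FreeMonoid.lift stepE r₂ := by
  intro r₁ r₂ h
  cases h <;> · funext s; rfl

lemma lift_eq_foldr (l : List TGen) (s : List TGen) :
    FreeMonoid.lift stepE (FreeMonoid.ofList l) s = l.foldr step s := by
  induction l with
  | nil => rfl
  | cons g t ih =>
    have : FreeMonoid.ofList (g :: t) = FreeMonoid.of g * FreeMonoid.ofList t := rfl
    rw [this, map_mul]
    show stepE g (FreeMonoid.lift stepE (FreeMonoid.ofList t) s) = _
    rw [ih]; rfl

lemma inv_step {g : TGen} {s : List TGen} {n : ℤ} (h : step g s = [TGen.b, TGen.y n]) :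
    (g = .a ∧ s = [.b, .y (n-1)]) ∨ (g = .c ∧ s = [.b, .y n]) ∨ (g = .b ∧ s = [.y n]) := by
  rcases g with _ | _ | _ | k | k <;>
    rcases s with _ | ⟨(_ | _ | _ | k1 | k1), (_ | ⟨(_ | _ | _ | k2 | k2), s⟩)⟩ <;>
    simp_all [step] <;> omega

lemma inv_step_single {g : TGen} {s : List TGen} {n : ℤ} (h : step g s = [TGen.y n]) :
    g = .y n ∧ s = [] := by
  rcases g with _ | _ | _ | k | k <;>
    rcases s with _ | ⟨(_ | _ | _ | k1 | k1), (_ | ⟨(_ | _ | _ | k2 | k2), s⟩)⟩ <;>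
    simp_all [step]

lemma step_ne_nil (g : TGen) (s : List TGen) : step g s ≠ [] := by
  rcases g with _ | _ | _ | k | k <;>
    rcases s with _ | ⟨(_ | _ | _ | k1 | k1), (_ | ⟨(_ | _ | _ | k2 | k2), s⟩)⟩ <;>
    simp [step]

lemma foldr_single {t : List TGen} {n : ℤ} (h : t.foldr step [] = [TGen.y n]) :
    t = [TGen.y n] := by
  match t with
  | [] => simp at h
  | g :: t' =>
    obtain ⟨rfl, h2⟩ := inv_step_single h
    match t' with
    | [] => rfl
    | g' :: t'' => exact absurd h2 (step_ne_nil _ _)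

lemma main_inv : ∀ (t : List TGen) (n : ℤ), t.foldr step [] = [TGen.b, TGen.y n] →
    ∃ (m : ℤ) (u : List TGen), t = u ++ [TGen.b, TGen.y m] ∧
      (∀ l ∈ u, l = TGen.a ∨ l = TGen.c) ∧ (u.count TGen.a : ℤ) = n - m := by
  intro t
  induction t with
  | nil => intro n h; simp at h
  | cons g t ih =>
    intro n h
    simp only [List.foldr_cons] at h
    rcases inv_step h with ⟨rfl, h2⟩ | ⟨rfl, h2⟩ | ⟨rfl, h2⟩
    · obtain ⟨m, u, rfl, hu, hc⟩ := ih (n-1) h2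
      refine ⟨m, .a :: u, rfl, ?_, ?_⟩
      · intro l hl
        rcases List.mem_cons.mp hl with rfl | hl
        · exact Or.inl rfl
        · exact hu l hl
      · simp only [List.count_cons_self]; push_cast; omega
    · obtain ⟨m, u, rfl, hu, hc⟩ := ih n h2
      refine ⟨m, .c :: u, rfl, ?_, ?_⟩
      · intro l hl
        rcases List.mem_cons.mp hl with rfl | hl
        · exact Or.inr rfl
        · exact hu l hl
      · rwa [List.count_cons_of_ne (by simp)]
    · exact ⟨n, [], by rw [foldr_single h2]; rfl, by simp, by simp⟩

lemma mk_rel {r₁ r₂ : FreeMonoid TGen} (h : TRel r₁ r₂) :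
    PresentedMonoid.mk TRel r₁ = PresentedMonoid.mk TRel r₂ :=
  Quotient.sound (ConGen.Rel.of _ _ h)

lemma main_fwd : ∀ (u : List TGen) (m : ℤ), (∀ l ∈ u, l = TGen.a ∨ l = TGen.c) →
    PresentedMonoid.mk TRel (FreeMonoid.ofList (u ++ [TGen.b, TGen.y m])) =
    PresentedMonoid.mk TRel (FreeMonoid.of .b * FreeMonoid.of (.y (m + u.count TGen.a))) := by
  intro u
  induction u with
  | nil =>
    intro m _
    simp only [List.count_nil, List.nil_append, Nat.cast_zero, add_zero]
    rfl
  | cons g t ih =>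
    intro m hu
    have hsplit : FreeMonoid.ofList ((g :: t) ++ [TGen.b, TGen.y m]) =
        FreeMonoid.of g * FreeMonoid.ofList (t ++ [TGen.b, TGen.y m]) := rfl
    rw [hsplit, map_mul, ih m (fun l hl => hu l (List.mem_cons_of_mem _ hl)), ← map_mul]
    rcases hu g List.mem_cons_self with rfl | rfl
    · rw [← mul_assoc, mk_rel (TRel.ayr (m + t.count TGen.a))]
      congr 2
      rw [List.count_cons_self]
      push_cast
      ring
    · rw [← mul_assoc, mk_rel (TRel.cyr (m + t.count TGen.a))]
      congr 2

lemma lift_eq_foldr' (w : FreeMonoid TGen) (s : List TGen) :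
    FreeMonoid.lift stepE w s = w.toList.foldr step s := by
  conv_lhs => rw [← FreeMonoid.ofList_toList w]
  exact lift_eq_foldr _ _

lemma ofList_decomp (u : List TGen) (m : ℤ) :
    FreeMonoid.ofList (u ++ [TGen.b, TGen.y m]) =
      FreeMonoid.ofList u * FreeMonoid.of TGen.b * FreeMonoid.of (TGen.y m) := by
  rw [FreeMonoid.ofList_append, FreeMonoid.ofList_cons, FreeMonoid.ofList_singleton, mul_assoc]


/-- A word `w` in the free monoid on the alphabet represents `b·yₙ` in `T` if and only if
`w = u b yₘ` for some `m ∈ ℤ` and some word `u` consisting only of the letters `a` and `c`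
in which the number of occurrences of `a` equals `n - m`. -/
theorem T_words_for_by (n : ℤ) (w : FreeMonoid TGen) :
    PresentedMonoid.mk TRel w = gen .b * gen (.y n) ↔
      ∃ (m : ℤ) (u : FreeMonoid TGen),
        w = u * FreeMonoid.of TGen.b * FreeMonoid.of (TGen.y m) ∧
        (∀ l ∈ u.toList, l = TGen.a ∨ l = TGen.c) ∧
        (u.toList.count TGen.a : ℤ) = n - m := by
  have hgen : gen .b * gen (.y n) =
      PresentedMonoid.mk TRel (FreeMonoid.of .b * FreeMonoid.of (.y n)) := (map_mul _ _ _).symm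
  constructor
  · intro h
    have h2 := congrArg (fun t : T =>
      (PresentedMonoid.lift stepE hstep t : List TGen → List TGen) []) h
    simp only [hgen] at h2
    have l1 : (PresentedMonoid.lift stepE hstep (PresentedMonoid.mk TRel w) :
        List TGen → List TGen) [] = w.toList.foldr step [] := lift_eq_foldr' w []
    have l2 : (PresentedMonoid.lift stepE hstep
        (PresentedMonoid.mk TRel (FreeMonoid.of .b * FreeMonoid.of (.y n))) :
        List TGen → List TGen) [] = [TGen.b, TGen.y n] := rfl
    have h3 : w.toList.foldr step [] = [TGen.b, TGen.y n] := by
      rw [← l1, ← l2]; exact h2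
    obtain ⟨m, u, hw, hu, hc⟩ := main_inv w.toList n h3
    refine ⟨m, FreeMonoid.ofList u, ?_, by simpa using hu, by simpa using hc⟩
    rw [← ofList_decomp, ← hw, FreeMonoid.ofList_toList]
  · rintro ⟨m, u, rfl, hu, hc⟩
    have key := main_fwd u.toList m hu
    have hw : (u * FreeMonoid.of TGen.b * FreeMonoid.of (TGen.y m)) =
        FreeMonoid.ofList (u.toList ++ [TGen.b, TGen.y m]) := by
      rw [ofList_decomp, FreeMonoid.ofList_toList]
    rw [hw, key, hgen]
    have : m + (u.toList.count TGen.a : ℤ) = n := by omega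
    rw [this]
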